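/- Pumping lemma for approximation properties: if a pseudo-run y_{2l−2} →π_{l−1}' y_{2l−1} →π_l y_{2l} ⋯ →π_K y_{2K} satisfies the approximation property A[P, l, INCR, I, +∞], then for all n_l, …, n_K ≥ 1, the pseudo-run induced by the path π_{l−1}' (π_l)^{n_l} π_l' (π_{l+1})^{n_{l+1}} ⋯ (π_K)^{n_K} from y_{2l−2} also satisfies A[P, l, INCR, I, +∞]. -/

import Mathlib

/-- Membership of an integer `d` in an interval given by optional lower bound
`lo` (`none` = `-∞`) and optional upper bound `hi` (`none` = `+∞`). -/
def MemI (lo hi : Option ℤ) (d : ℤ) : Prop :=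
  (∀ u, lo = some u → u ≤ d) ∧ (∀ v, hi = some v → d ≤ v)

/-- Flattened path of the first `r` segments of a decomposed pseudo-run, where
segment `s` consists of the connector path `σ s` followed by the loop `π s`. -/
def pre {n : ℕ} (σ π : ℕ → List (Fin n → ℤ)) (r : ℕ) : List (Fin n → ℤ) :=
  ((List.range r).map fun s => σ s ++ π s).flatten

/-- The pseudo-configuration `x_{2r+1}` (just before loop `π r`). -/
def aConf {n : ℕ} (c₀ : Fin n → ℤ) (σ π : ℕ → List (Fin n → ℤ)) (r : ℕ) :
    Fin n → ℤ :=
  c₀ + (pre σ π r ++ σ r).sum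

/-- The pseudo-configuration `x_{2r+2}` (just after loop `π r`). -/
def bConf {n : ℕ} (c₀ : Fin n → ℤ) (σ π : ℕ → List (Fin n → ℤ)) (r : ℕ) :
    Fin n → ℤ :=
  c₀ + (pre σ π (r + 1)).sum

/-- The pseudo-configuration at offset `i` inside segment `r`. -/
def conf {n : ℕ} (c₀ : Fin n → ℤ) (σ π : ℕ → List (Fin n → ℤ)) (r i : ℕ) :
    Fin n → ℤ :=
  c₀ + (pre σ π r ++ (σ r ++ π r).take i).sum

/-- The approximation property `A[P, l, INCR, I, +∞]` for a decomposed
pseudo-run with `M + 1` loop segments (segments reindexed from `0`), for the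
generalized unboundedness property `P` given by interval bounds `lo`, `hi`:
(transitions in `T`); (P1') the effect of each loop `π r` lies in the
corresponding intervals; (P2') a negative effect on component `j` at stage `r`
implies `j ∈ INCR` or an earlier stage with positive effect on `j`;
(P3') with bound `+∞`: every pseudo-configuration strictly before the end of
segment `r` is nonnegative on every `j ∈ I` with `j ∉ INCR` and with no
earlier stage of positive effect on `j`. -/
def SatA {n : ℕ} (T : Finset (Fin n → ℤ)) (M : ℕ) (INCR I : Finset (Fin n))
    (lo hi : ℕ → Fin n → Option ℤ) (c₀ : Fin n → ℤ)
    (σ π : ℕ → List (Fin n → ℤ)) : Prop :=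
  (∀ r ≤ M, ∀ t ∈ σ r ++ π r, t ∈ T) ∧
  (∀ r ≤ M, ∀ j, MemI (lo r j) (hi r j) (bConf c₀ σ π r j - aConf c₀ σ π r j)) ∧
  (∀ r ≤ M, ∀ j, bConf c₀ σ π r j - aConf c₀ σ π r j < 0 →
      j ∈ INCR ∨ ∃ r' < r, 0 < bConf c₀ σ π r' j - aConf c₀ σ π r' j) ∧
  (∀ r ≤ M, ∀ i < (σ r ++ π r).length, ∀ j ∈ I, j ∉ INCR →
      (∀ r' < r, ¬ 0 < bConf c₀ σ π r' j - aConf c₀ σ π r' j) →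
      0 ≤ conf c₀ σ π r i j)

/-- Weak satisfaction of a generalized unboundedness property `P` (given by
interval bounds `lo`, `hi`) by a decomposed pseudo-run with `M + 1` loop
segments: (transitions in `T`); (P1) the effect of loop `π r` lies in the
corresponding intervals; (P2) a negative effect on `j` at stage `r` implies an
earlier stage with positive effect on `j`; (P3) every pseudo-configuration with
a negative `j`-th entry occurs after some stage with positive effect on `j`. -/
def WeakSat {n : ℕ} (T : Finset (Fin n → ℤ)) (M : ℕ)
    (lo hi : ℕ → Fin n → Option ℤ) (c₀ : Fin n → ℤ)
    (σ π : ℕ → List (Fin n → ℤ)) : Prop :=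
  (∀ r ≤ M, ∀ t ∈ σ r ++ π r, t ∈ T) ∧
  (∀ r ≤ M, ∀ j, MemI (lo r j) (hi r j) (bConf c₀ σ π r j - aConf c₀ σ π r j)) ∧
  (∀ r ≤ M, ∀ j, bConf c₀ σ π r j - aConf c₀ σ π r j < 0 →
      ∃ r' < r, 0 < bConf c₀ σ π r' j - aConf c₀ σ π r' j) ∧
  (∀ r ≤ M, ∀ i < (σ r ++ π r).length, ∀ j, conf c₀ σ π r i j < 0 →
      ∃ r' < r, 0 < bConf c₀ σ π r' j - aConf c₀ σ π r' j)

/-- Pumping lemma for approximation properties: if a decomposed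
pseudo-run `y_{2l−2} →σ_l y_{2l−1} →π_l y_{2l} ⋯ →π_K y_{2K}` (segments
reindexed from `0` to `M`) satisfies the approximation property
`A[P, l, INCR, I, +∞]`, then for all `e_0, …, e_M ≥ 1`, the pseudo-run induced
by the pumped path `σ_0 (π_0)^{e_0} σ_1 (π_1)^{e_1} ⋯ (π_M)^{e_M}` also
satisfies `A[P, l, INCR, I, +∞]` (witnessed by the decomposition that places
each cut just before the last copy of each loop, so that the connector of
segment `r` becomes `σ r` followed by `e r − 1` copies of `π r`, whose
flattened path is exactly the pumped path). -/
lemma pre_succ {n : ℕ} (σ π : ℕ → List (Fin n → ℤ)) (r : ℕ) :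
    pre σ π (r + 1) = pre σ π r ++ (σ r ++ π r) := by
  simp [pre, List.range_succ]

lemma diff_apply {n : ℕ} (c₀ : Fin n → ℤ) (σ π : ℕ → List (Fin n → ℤ))
    (r : ℕ) (j : Fin n) :
    bConf c₀ σ π r j - aConf c₀ σ π r j = (π r).sum j := by
  simp [bConf, aConf, pre_succ, List.sum_append, Pi.add_apply]

lemma flatten_replicate_sum {α : Type*} [AddCommMonoid α] (B : List α) (k : ℕ) :
    (List.replicate k B).flatten.sum = k • B.sum := by
  induction k with
  | zero => simp
  | succ k ih => simp [List.replicate_succ, ih, succ_nsmul]; abel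

lemma flatten_replicate_succ {α : Type*} (B : List α) (k : ℕ) :
    (List.replicate (k + 1) B).flatten = (List.replicate k B).flatten ++ B := by
  rw [List.replicate_succ']; simp

lemma take_flatten_replicate {α : Type*} [AddCommMonoid α] (B : List α)
    (m i : ℕ) (hi : i < m * B.length) :
    ∃ k : ℕ, ∃ i' < B.length,
      ((List.replicate m B).flatten.take i).sum = k • B.sum + (B.take i').sum := by
  induction m generalizing i with
  | zero => simp at hi
  | succ m ih =>
    rw [List.replicate_succ, List.flatten_cons]
    by_cases hB : i < B.length
    · refine ⟨0, i, hB, ?_⟩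
      rw [List.take_append_of_le_length (Nat.le_of_lt hB)]
      simp
    · push_neg at hB
      have hmul : (m + 1) * B.length = m * B.length + B.length := by ring
      have hL : 0 < B.length := by
        rcases Nat.eq_zero_or_pos B.length with h0 | h0
        · rw [h0, Nat.mul_zero] at hi; omega
        · exact h0
      obtain ⟨k, i', hi', hsum⟩ := ih (i - B.length) (by omega)
      refine ⟨k + 1, i', hi', ?_⟩
      have : i = B.length + (i - B.length) := by omega
      rw [this, List.take_length_add_append, List.sum_append, hsum, succ_nsmul]
      abel

lemma take_append_flatten_replicate {α : Type*} [AddCommMonoid α]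
    (A B : List α) (m i : ℕ) (hi : i < A.length + m * B.length) :
    ∃ k : ℕ, ∃ i' < (A ++ B).length,
      ((A ++ (List.replicate m B).flatten).take i).sum
        = k • B.sum + ((A ++ B).take i').sum := by
  by_cases hA : i ≤ A.length
  · refine ⟨0, i, ?_, ?_⟩
    · rcases Nat.lt_or_ge i A.length with h | h
      · simp only [List.length_append]; omega
      · have : A.length < i + 1 := by omega
        have hmL : 0 < m * B.length := by omega
        have : 0 < B.length := by
          rcases Nat.eq_zero_or_pos B.length with h0 | h0
          · simp [h0] at hmL
          · exact h0
        simp only [List.length_append]; omega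
    · rw [List.take_append_of_le_length hA, List.take_append_of_le_length hA]
      simp
  · push_neg at hA
    obtain ⟨k, i', hi', hsum⟩ := take_flatten_replicate B m (i - A.length)
      (by omega)
    refine ⟨k, A.length + i', by simp; omega, ?_⟩
    have : i = A.length + (i - A.length) := by omega
    rw [this, List.take_length_add_append, List.take_length_add_append, List.sum_append,
      List.sum_append, hsum]
    abel

lemma pre_pump_apply {n : ℕ} (σ π : ℕ → List (Fin n → ℤ)) (e : ℕ → ℕ)
    (r : ℕ) (j : Fin n) (h0 : ∀ s < r, (π s).sum j = 0) :
    (pre (fun s => σ s ++ (List.replicate (e s - 1) (π s)).flatten) π r).sum j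
      = (pre σ π r).sum j := by
  induction r with
  | zero => rfl
  | succ r ih =>
    rw [pre_succ, pre_succ, List.sum_append, List.sum_append]
    have ih' := ih (fun s hs => h0 s (Nat.lt_succ_of_lt hs))
    have hfl : ((List.replicate (e r - 1) (π r)).flatten.sum) j
        = (e r - 1) • ((π r).sum j) := by
      rw [flatten_replicate_sum]; simp
    simp only [Pi.add_apply, List.sum_append]
    rw [ih', hfl, h0 r (Nat.lt_succ_self r)]
    simp

theorem satA_pumping (n M : ℕ) (T : Finset (Fin n → ℤ))
    (INCR I : Finset (Fin n)) (lo hi : ℕ → Fin n → Option ℤ)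
    (c₀ : Fin n → ℤ) (σ π : ℕ → List (Fin n → ℤ))
    (h : SatA T M INCR I lo hi c₀ σ π)
    (e : ℕ → ℕ) (he : ∀ r ≤ M, 1 ≤ e r) :
    SatA T M INCR I lo hi c₀
      (fun r => σ r ++ (List.replicate (e r - 1) (π r)).flatten) π := by
  obtain ⟨hT, h1, h2, h3⟩ := h
  set σ' : ℕ → List (Fin n → ℤ) :=
    fun r => σ r ++ (List.replicate (e r - 1) (π r)).flatten with hσ'
  refine ⟨?_, ?_, ?_, ?_⟩
  · intro r hr t ht
    apply hT r hr
    simp only [hσ', List.mem_append, List.mem_flatten, List.mem_replicate] at ht ⊢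
    rcases ht with (ht | ⟨l, ⟨_, rfl⟩, ht⟩) | ht
    · exact Or.inl ht
    · exact Or.inr ht
    · exact Or.inr ht
  · intro r hr j
    rw [diff_apply, ← diff_apply c₀ σ π]
    exact h1 r hr j
  · intro r hr j hneg
    rw [diff_apply] at hneg
    rcases h2 r hr j (by rw [diff_apply]; exact hneg) with hI | ⟨r', hr', hpos⟩
    · exact Or.inl hI
    · exact Or.inr ⟨r', hr', by rw [diff_apply]; rw [diff_apply] at hpos; exact hpos⟩
  · intro r hr i hi j hjI hjIN hneg
    have hneg' : ∀ r' < r, ¬ 0 < (π r').sum j := by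
      intro r' hr' h'
      exact hneg r' hr' (by rw [diff_apply]; exact h')
    -- earlier loops have zero effect on j
    have hD0 : ∀ s < r, (π s).sum j = 0 := by
      intro s hs
      have hsM : s ≤ M := le_trans (Nat.le_of_lt hs) hr
      by_contra hne
      have hlt : (π s).sum j < 0 := by
        rcases lt_trichotomy ((π s).sum j) 0 with h' | h' | h'
        · exact h'
        · exact absurd h' hne
        · exact absurd h' (hneg' s hs)
      rcases h2 s hsM j (by rw [diff_apply]; exact hlt) with hI' | ⟨s', hs', hpos⟩
      · exact hjIN hI'
      · rw [diff_apply] at hpos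
        exact hneg' s' (lt_trans hs' hs) hpos
    have hDr : 0 ≤ (π r).sum j := by
      by_contra h'
      push_neg at h'
      rcases h2 r hr j (by rw [diff_apply]; exact h') with hI' | ⟨s', hs', hpos⟩
      · exact hjIN hI'
      · rw [diff_apply] at hpos
        exact hneg' s' hs' hpos
    have hpre : (pre σ' π r).sum j = (pre σ π r).sum j :=
      pre_pump_apply σ π e r j hD0
    -- rewrite the segment list
    have hseg : σ' r ++ π r = σ r ++ (List.replicate (e r) (π r)).flatten := by
      have h1 : e r - 1 + 1 = e r := by have := he r hr; omega
      rw [hσ', List.append_assoc, ← flatten_replicate_succ, h1]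
    have hlen : i < (σ r).length + e r * (π r).length := by
      rw [hseg] at hi
      simpa [List.length_flatten, List.map_replicate, List.sum_replicate,
        smul_eq_mul] using hi
    obtain ⟨k, i', hi', hsum⟩ :=
      take_append_flatten_replicate (σ r) (π r) (e r) i hlen
    have hold : 0 ≤ conf c₀ σ π r i' j :=
      h3 r hr i' hi' j hjI hjIN (fun r' hr' h' => hneg' r' hr'
        (by rw [diff_apply] at h'; exact h'))
    -- compute the new configuration
    have hconf : conf c₀ σ' π r i j
        = conf c₀ σ π r i' j + k • ((π r).sum j) := by
      have h1' : conf c₀ σ' π r i j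
          = c₀ j + (pre σ' π r).sum j + ((σ' r ++ π r).take i).sum j := by
        simp [conf, List.sum_append, Pi.add_apply]; ring
      have h2' : conf c₀ σ π r i' j
          = c₀ j + (pre σ π r).sum j + (((σ r ++ π r)).take i').sum j := by
        simp [conf, List.sum_append, Pi.add_apply]; ring
      rw [h1', h2', hpre, hseg, hsum]
      simp only [Pi.add_apply, Pi.smul_apply, smul_eq_mul]
      ring
    rw [hconf]
    have : 0 ≤ k • ((π r).sum j) := by
      simpa [smul_eq_mul] using mul_nonneg (Int.ofNat_nonneg k) hDr
    omega
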